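/- Let α, r > 0, μ ≤ L, 0 < r < 2μ/L². Consider the momentum recursion θ_{k+1} = θ_k + α(θ_k - θ_{k-1}) - r∇f(θ_k) with f μ-strongly convex and L-smooth, minimizer θ*. Then ‖θ_{k+1} - θ*‖² ≤ m‖θ_k - θ*‖² + n‖θ_{k-1} - θ*‖² with m = 1 + 3α + 2rα + 2α² + rαL² + r²L² - 2rμ and n = α + 2rα + 2α². -/
import Mathlib


open RealInnerProductSpace

set_option maxHeartbeats 1000000 in
theorem stmt_13 {d : ℕ} (f : EuclideanSpace ℝ (Fin d) → ℝ) (μ L r α : ℝ)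
    (hμ : 0 < μ) (hμL : μ ≤ L) (hα : 0 < α)
    (hr : 0 < r) (hr2 : r < 2 * μ / L ^ 2)
    (hdiff : Differentiable ℝ f)
    (hsc : ∀ x y, ⟪gradient f x - gradient f y, x - y⟫ ≥ μ * ‖x - y‖ ^ 2)
    (hL : ∀ x y, ‖gradient f x - gradient f y‖ ≤ L * ‖x - y‖)
    (θs : EuclideanSpace ℝ (Fin d)) (hstat : gradient f θs = 0)
    (θ : ℕ → EuclideanSpace ℝ (Fin d))
    (hrec : ∀ k, 1 ≤ k →
      θ (k + 1) = θ k + α • (θ k - θ (k - 1)) - r • gradient f (θ k)) :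
    ∀ k, 1 ≤ k →
      ‖θ (k + 1) - θs‖ ^ 2 ≤
        (1 + 3 * α + 2 * r * α + 2 * α ^ 2 + r * α * L ^ 2 + r ^ 2 * L ^ 2 - 2 * r * μ) *
          ‖θ k - θs‖ ^ 2 +
        (α + 2 * r * α + 2 * α ^ 2) * ‖θ (k - 1) - θs‖ ^ 2 := by
  intro k hk
  set a := θ k - θs with ha
  set c := θ (k - 1) - θs with hc
  set g := gradient f (θ k) with hg
  have hx : θ (k + 1) - θs = (1 + α) • a - α • c - r • g := by
    rw [hrec k hk, ha, hc]
    module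
  -- key facts
  have hag : ⟪a, g⟫ ≥ μ * ‖a‖ ^ 2 := by
    have := hsc (θ k) θs
    rw [hstat, sub_zero] at this
    rw [real_inner_comm]
    exact this
  have hgn : ‖g‖ ≤ L * ‖a‖ := by
    have := hL (θ k) θs
    rwa [hstat, sub_zero] at this
  have hgn2 : ‖g‖ ^ 2 ≤ L ^ 2 * ‖a‖ ^ 2 := by
    have h1 : (0:ℝ) ≤ ‖g‖ := norm_nonneg _
    nlinarith [norm_nonneg a]
  have hac : ⟪a, c⟫ ≥ -((‖a‖ ^ 2 + ‖c‖ ^ 2) / 2) := by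
    have h := real_inner_le_norm a c
    have h2 : |⟪a, c⟫| ≤ ‖a‖ * ‖c‖ := abs_real_inner_le_norm a c
    have := abs_le.mp h2
    nlinarith [sq_nonneg (‖a‖ - ‖c‖)]
  have hcg : ⟪c, g⟫ ≤ (‖c‖ ^ 2 + ‖g‖ ^ 2) / 2 := by
    have h2 : |⟪c, g⟫| ≤ ‖c‖ * ‖g‖ := abs_real_inner_le_norm c g
    have := abs_le.mp h2
    nlinarith [sq_nonneg (‖c‖ - ‖g‖)]
  have hexp : ‖(1 + α) • a - α • c - r • g‖ ^ 2 =
      (1 + α) ^ 2 * ‖a‖ ^ 2 + α ^ 2 * ‖c‖ ^ 2 + r ^ 2 * ‖g‖ ^ 2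
      - 2 * (1 + α) * α * ⟪a, c⟫ - 2 * (1 + α) * r * ⟪a, g⟫ + 2 * α * r * ⟪c, g⟫ := by
    rw [← real_inner_self_eq_norm_sq, ← real_inner_self_eq_norm_sq,
      ← real_inner_self_eq_norm_sq, ← real_inner_self_eq_norm_sq]
    simp only [inner_sub_left, inner_sub_right, real_inner_smul_left, real_inner_smul_right]
    rw [real_inner_comm c a, real_inner_comm g a, real_inner_comm g c]
    ring
  rw [hx, hexp]
  have h1 : -(2 * (1 + α) * α * ⟪a, c⟫) ≤ (1 + α) * α * (‖a‖ ^ 2 + ‖c‖ ^ 2) := by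
    have hpos : (0:ℝ) ≤ 2 * (1 + α) * α := by positivity
    have := mul_le_mul_of_nonneg_left hac hpos
    linarith
  have h2 : -(2 * (1 + α) * r * ⟪a, g⟫) ≤ -(2 * (1 + α) * r * (μ * ‖a‖ ^ 2)) := by
    have hpos : (0:ℝ) ≤ 2 * (1 + α) * r := by positivity
    have := mul_le_mul_of_nonneg_left hag hpos
    linarith
  have h3 : 2 * α * r * ⟪c, g⟫ ≤ α * r * (‖c‖ ^ 2 + ‖g‖ ^ 2) := by
    have hpos : (0:ℝ) ≤ 2 * α * r := by positivity
    have := mul_le_mul_of_nonneg_left hcg hpos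
    linarith
  have h4 : (r ^ 2 + α * r) * ‖g‖ ^ 2 ≤ (r ^ 2 + α * r) * (L ^ 2 * ‖a‖ ^ 2) := by
    have hpos : (0:ℝ) ≤ r ^ 2 + α * r := by positivity
    exact mul_le_mul_of_nonneg_left hgn2 hpos
  have e1 : (0:ℝ) ≤ r * α * ‖a‖ ^ 2 := by positivity
  have e2 : (0:ℝ) ≤ r * μ * α * ‖a‖ ^ 2 := by positivity
  have e3 : (0:ℝ) ≤ r * α * ‖c‖ ^ 2 := by positivity
  linarith
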